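/- Let m > 1 and 2 ≤ N ≤ m, and assume (H1). Let u be a radial solution on [0,R). Then (N−m)u(r) + (m−1) r u'(r) → 0 as r → R; moreover, if r_b ∈ (0,R) satisfies u(r_b) = b, then (N−m)b + (m−1) r_b u'(r_b) ≤ 0. (In terms of the inverse function r = r(u) of u, this says A(u) = (N−m)u + (m−1) r(u)/r'(u) satisfies A(u) → 0 as u → 0⁺ and A(b) ≤ 0.) -/

import Mathlib

open Filter Set MeasureTheory intervalIntegral

noncomputable section

/-- The half-open interval `[0, R)` inside `ℝ`, where `R : EReal` may be `∞`. -/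
def domR (R : EReal) : Set ℝ := {r : ℝ | 0 ≤ r ∧ (r : EReal) < R}

/-- The filter describing `r → R⁻` inside `ℝ` (it equals `atTop` when `R = ∞`). -/
def limR (R : EReal) : Filter ℝ := Filter.comap Real.toEReal (nhdsWithin R (Set.Iio R))

/-- Assumption (H1): `f` is continuous on `(0,∞)`, nonpositive on `(0,b]` and
positive on `(b,∞)`, with `b > 0`. -/
def H1cond (b : ℝ) (f : ℝ → ℝ) : Prop :=
  0 < b ∧ ContinuousOn f (Set.Ioi 0) ∧
    (∀ u : ℝ, 0 < u → u ≤ b → f u ≤ 0) ∧ (∀ u : ℝ, b < u → 0 < f u)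

/-- `u` (with derivative `u'`) is a radial solution on `[0, R)` of
`(r^{N-1} |u'|^{m-2} u')' = - r^{N-1} f(u)`, positive, `C¹` up to the origin,
with `u'(0) = 0` and `u, u' → 0` as `r → R`. -/
def IsRadialSolution (N : ℕ) (m : ℝ) (f : ℝ → ℝ) (R : EReal) (u u' : ℝ → ℝ) : Prop :=
  0 < R ∧
  (∀ r ∈ domR R, HasDerivWithinAt u (u' r) (domR R) r) ∧
  ContinuousOn u' (domR R) ∧
  (∀ r ∈ domR R, 0 < u r) ∧
  u' 0 = 0 ∧
  (∀ r : ℝ, 0 < r → (r : EReal) < R →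
    HasDerivAt (fun s : ℝ => s ^ (N - 1) * |u' s| ^ (m - 2) * u' s)
      (-(r ^ (N - 1) * f (u r))) r) ∧
  Filter.Tendsto u (limR R) (nhds 0) ∧
  Filter.Tendsto u' (limR R) (nhds 0)

/-- `rr` is the (strictly decreasing) inverse on `(0, α)` of a radial solution `u`,
with derivatives `rr'`, `rr''`, satisfying the transformed ODE
`(m-1) r'' = (N-1) r'²/r + f(u) |r'|^m r'`. -/
def IsInvSol (N : ℕ) (m α : ℝ) (f : ℝ → ℝ) (R : EReal) (u rr rr' rr'' : ℝ → ℝ) : Prop :=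
  (∀ v ∈ Set.Ioo 0 α,
    0 < rr v ∧ (rr v : EReal) < R ∧ u (rr v) = v ∧
    HasDerivAt rr (rr' v) v ∧ rr' v < 0 ∧ HasDerivAt rr' (rr'' v) v ∧
    (m - 1) * rr'' v = ((N : ℝ) - 1) * (rr' v) ^ 2 / rr v + f v * |rr' v| ^ m * rr' v) ∧
  (∀ x : ℝ, 0 < x → (x : EReal) < R → ∃ v ∈ Set.Ioo 0 α, rr v = x)

/-- The function `ω(u) = r(u)^{N-1} / (r'(u) |r'(u)|^{m-2})`. -/
def omegaF (N : ℕ) (m : ℝ) (rr rr' : ℝ → ℝ) (v : ℝ) : ℝ :=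
  rr v ^ (N - 1) / (rr' v * |rr' v| ^ (m - 2))

/-- The function `P(u) = a u ω(u) + r(u)^N ((m-1)/m · 1/|r'(u)|^m + (a/N) u f(u))`. -/
def PF (N : ℕ) (m a : ℝ) (f rr rr' : ℝ → ℝ) (v : ℝ) : ℝ :=
  a * v * omegaF N m rr rr' v +
    rr v ^ N * ((m - 1) / m * (1 / |rr' v| ^ m) + a / (N : ℝ) * v * f v)


set_option maxHeartbeats 1000000

-- auxiliary lemmas
lemma limR_top : limR ⊤ = atTop := by
  unfold limR
  have h1 : (Iio (⊤:EReal)) = {(⊤:EReal)}ᶜ := by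
    ext x; simp [lt_top_iff_ne_top]
  rw [h1, EReal.nhdsWithin_top, Filter.comap_map EReal.coe_injective]

lemma limR_coe (x : ℝ) : limR (x : ℝ) = nhdsWithin x (Iio x) := by
  unfold limR
  rw [nhdsWithin, nhdsWithin, Filter.comap_inf, Filter.comap_principal]
  congr 1
  · rw [EReal.nhds_coe, Filter.comap_map EReal.coe_injective]
  · congr 1; ext y; exact EReal.coe_lt_coe_iff

lemma limR_neBot {R : EReal} (hR : 0 < R) : (limR R).NeBot := by
  induction R with
  | bot => simp at hR
  | coe x => rw [limR_coe]; infer_instance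
  | top => rw [limR_top]; infer_instance

lemma eventually_limR {R : EReal} (s : ℝ) (hs : 0 ≤ s) (hsR : (s : EReal) < R) :
    ∀ᶠ r in limR R, s < r ∧ r ∈ domR R := by
  induction R with
  | bot => exact absurd hsR (by simp)
  | coe x =>
      rw [limR_coe]
      have hsx : s < x := by exact_mod_cast hsR
      filter_upwards [Ioo_mem_nhdsLT hsx] with r hr
      exact ⟨hr.1, le_of_lt (lt_of_le_of_lt hs hr.1), by exact_mod_cast hr.2⟩
  | top =>
      rw [limR_top]
      filter_upwards [eventually_gt_atTop s] with r hr
      exact ⟨hr, le_of_lt (lt_of_le_of_lt hs hr), by exact_mod_cast EReal.coe_lt_top r⟩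

lemma exists_seg {R : EReal} {r : ℝ} (hrR : (r : EReal) < R) :
    ∃ s : ℝ, r < s ∧ ∀ x ∈ Ioo (0:ℝ) s, 0 < x ∧ (x : EReal) < R := by
  induction R with
  | bot => exact absurd hrR (by simp)
  | coe y =>
      have hry : r < y := by exact_mod_cast hrR
      refine ⟨(r + y) / 2, by linarith, fun x hx => ⟨hx.1, ?_⟩⟩
      have : x < y := by have := hx.2; linarith
      exact_mod_cast this
  | top => exact ⟨r + 1, by linarith, fun x hx => ⟨hx.1, EReal.coe_lt_top x⟩⟩

lemma phi_abs (m : ℝ) (hm : 2 ≤ m) (x : ℝ) : |(|x| ^ (m-2) * x)| = |x| ^ (m-1) := by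
  rcases eq_or_ne x 0 with hx | hx
  · subst hx
    rw [mul_zero, abs_zero, Real.zero_rpow (by linarith : m - 1 ≠ 0)]
  · have hxa : |x| ≠ 0 := abs_ne_zero.2 hx
    rw [abs_mul, abs_of_nonneg (Real.rpow_nonneg (abs_nonneg x) _),
      ← Real.rpow_add_one hxa (m - 2)]
    ring_nf

lemma phi_mul (m : ℝ) (hm : 2 ≤ m) (x : ℝ) : x * (|x| ^ (m-2) * x) = |x| ^ m := by
  rcases eq_or_ne x 0 with hx | hx
  · subst hx
    rw [zero_mul, abs_zero, Real.zero_rpow (by linarith : m ≠ 0)]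
  · have hxa : (0:ℝ) < |x| := abs_pos.2 hx
    have h1 : x * (|x| ^ (m-2) * x) = |x| ^ (m-2) * (x * x) := by ring
    have h2 : x * x = |x| * |x| := by
      rcases abs_cases x with ⟨h, _⟩ | ⟨h, _⟩ <;> rw [h] <;> ring
    rw [h1, h2, ← mul_assoc, ← Real.rpow_add_one (ne_of_gt hxa) (m-2),
      ← Real.rpow_add_one (ne_of_gt hxa)]
    ring_nf

lemma phi_inv (m : ℝ) (hm1 : 1 < m) (hm : 2 ≤ m) (x : ℝ) :
    |(|x| ^ (m-2) * x)| ^ (m/(m-1) - 2) * (|x| ^ (m-2) * x) = x := by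
  rcases eq_or_ne x 0 with hx | hx
  · subst hx; simp
  · have hxa : (0:ℝ) < |x| := abs_pos.2 hx
    rw [phi_abs m hm x, ← Real.rpow_mul (abs_nonneg x)]
    have hm1' : m - 1 ≠ 0 := by linarith
    have he : (m-1) * (m/(m-1) - 2) + (m-2) = 0 := by
      field_simp
      ring
    have : |x| ^ ((m-1) * (m/(m-1) - 2)) * (|x| ^ (m-2) * x)
        = |x| ^ ((m-1) * (m/(m-1) - 2) + (m-2)) * x := by
      rw [Real.rpow_add hxa]; ring
    rw [this, he, Real.rpow_zero, one_mul]

lemma ereal_cases {R : EReal} (hT : R ≠ ⊤) (hB : R ≠ ⊥) : ∃ x : ℝ, R = (x : EReal) := by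
  induction R with
  | bot => exact absurd rfl hB
  | coe x => exact ⟨x, rfl⟩
  | top => exact absurd rfl hT

lemma phi_nonpos (m : ℝ) {x : ℝ} (hx : x ≤ 0) : |x| ^ (m-2) * x ≤ 0 :=
  mul_nonpos_of_nonneg_of_nonpos (Real.rpow_nonneg (abs_nonneg x) _) hx


/-- for `m > 1`, `2 ≤ N ≤ m`, under (H1), any radial solution satisfies
`(N−m)u(r) + (m−1) r u'(r) → 0` as `r → R`, and `(N−m)b + (m−1) r_b u'(r_b) ≤ 0`
at any point `r_b ∈ (0, R)` where `u(r_b) = b`. -/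
theorem stmt10 (N : ℕ) (m b : ℝ) (f : ℝ → ℝ) (hm : 1 < m)
    (hN2 : 2 ≤ N) (hNm : (N : ℝ) ≤ m) (hf : H1cond b f)
    (R : EReal) (u u' : ℝ → ℝ) (hu : IsRadialSolution N m f R u u') :
    Filter.Tendsto (fun r : ℝ => ((N : ℝ) - m) * u r + (m - 1) * r * u' r)
      (limR R) (nhds 0) ∧
    ∀ rb : ℝ, 0 < rb → (rb : EReal) < R → u rb = b →
      ((N : ℝ) - m) * b + (m - 1) * rb * u' rb ≤ 0 := by
  obtain ⟨hR, hud, hu'c, hupos, hu'0, hW, hulim, hu'lim⟩ := hu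
  obtain ⟨hb, hfc, hfnp, hfp⟩ := hf
  haveI : (limR R).NeBot := limR_neBot hR
  have hm2 : 2 ≤ m := le_trans (by exact_mod_cast hN2) hNm
  have hm0 : (0:ℝ) < m := by linarith
  have hm1 : (0:ℝ) < m - 1 := by linarith
  have hN1 : (1:ℝ) ≤ (N:ℝ) - 1 := by
    have : (2:ℝ) ≤ (N:ℝ) := by exact_mod_cast hN2
    linarith
  set W : ℝ → ℝ := fun s => s ^ (N - 1) * |u' s| ^ (m - 2) * u' s with hWdef
  set F : ℝ → ℝ := fun t => ∫ s in b..t, f s with hFdef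
  set E : ℝ → ℝ := fun r => (m-1)/m * |u' r| ^ m + F (u r) with hEdef
  -- basic integrability and FTC for F
  have h_int2 : ∀ t s : ℝ, 0 < t → 0 < s → IntervalIntegrable f volume t s := by
    intro t s ht hs
    apply ContinuousOn.intervalIntegrable
    apply hfc.mono
    intro x hx
    exact lt_of_lt_of_le (lt_min ht hs) hx.1
  have h_int : ∀ t : ℝ, 0 < t → IntervalIntegrable f volume b t :=
    fun t ht => h_int2 b t hb ht
  have hF_deriv : ∀ t : ℝ, 0 < t → HasDerivAt F (f t) t := by
    intro t ht
    exact intervalIntegral.integral_hasDerivAt_right (h_int t ht)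
      (ContinuousOn.stronglyMeasurableAtFilter isOpen_Ioi hfc t ht)
      (hfc.continuousAt (Ioi_mem_nhds ht))
  have hF_mono : ∀ t s : ℝ, 0 < t → t ≤ s → s ≤ b → F s ≤ F t := by
    intro t s ht hts hsb
    have hs : 0 < s := lt_of_lt_of_le ht hts
    have h1 : F s - F t = ∫ x in t..s, f x :=
      intervalIntegral.integral_interval_sub_left (h_int s hs) (h_int t ht)
    have h2 : (∫ x in t..s, f x) ≤ 0 := by
      have hle : ∀ x ∈ Icc t s, f x ≤ (fun _ => (0:ℝ)) x := by
        intro x hx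
        exact hfnp x (lt_of_lt_of_le ht hx.1) (le_trans hx.2 hsb)
      have := intervalIntegral.integral_mono_on hts (h_int2 t s ht hs)
        intervalIntegrable_const hle
      simpa using this
    linarith
  -- basic facts about u
  have hcontu : ContinuousOn u (domR R) := fun r hr => (hud r hr).continuousWithinAt
  have hIcc_sub : ∀ σ ρ : ℝ, 0 ≤ σ → ρ ∈ domR R → Icc σ ρ ⊆ domR R := by
    intro σ ρ hσ hρ x hx
    exact ⟨le_trans hσ hx.1, lt_of_le_of_lt (EReal.coe_le_coe_iff.2 hx.2) hρ.2⟩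
  have hderivU : ∀ r : ℝ, 0 < r → (r:EReal) < R → HasDerivAt u (u' r) r := by
    intro r h1 h2
    obtain ⟨s, hrs, hseg⟩ := exists_seg h2
    have hU : Ioo (0:ℝ) s ∈ nhds r := isOpen_Ioo.mem_nhds ⟨h1, hrs⟩
    exact (hud r ⟨h1.le, h2⟩).hasDerivAt
      (mem_of_superset hU (fun x hx => ⟨(hseg x hx).1.le, (hseg x hx).2⟩))
  -- derivative of the energy
  have hE_deriv : ∀ r : ℝ, 0 < r → (r:EReal) < R →
      HasDerivAt E (-(((N:ℝ)-1)) * (u' r * (|u' r| ^ (m-2) * u' r)) / r) r := by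
    intro r hr hrR
    obtain ⟨s, hrs, hseg⟩ := exists_seg hrR
    have hU : Ioo (0:ℝ) s ∈ nhds r := isOpen_Ioo.mem_nhds ⟨hr, hrs⟩
    have hWd : HasDerivAt W (-(r ^ (N-1) * f (u r))) r := hW r hr hrR
    have hpow : HasDerivAt (fun x : ℝ => x ^ (N-1)) (((N-1 : ℕ):ℝ) * r ^ (N-1-1)) r :=
      hasDerivAt_pow (N-1) r
    have hrne : r ^ (N-1) ≠ 0 := pow_ne_zero _ (ne_of_gt hr)
    have hψd : HasDerivAt (fun x => W x / x ^ (N-1))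
        ((-(r ^ (N-1) * f (u r)) * r ^ (N-1) - W r * (((N-1:ℕ):ℝ) * r ^ (N-1-1)))
          / (r ^ (N-1)) ^ 2) r :=
      hWd.div hpow hrne
    have hψeq : ∀ x : ℝ, x ≠ 0 → W x / x ^ (N-1) = |u' x| ^ (m-2) * u' x := by
      intro x hx
      rw [hWdef]
      field_simp
    have hp' : 1 < m / (m-1) := by
      rw [lt_div_iff₀ hm1]; linarith
    have hΦd : HasDerivAt (fun y : ℝ => |y| ^ (m/(m-1)))
        (m/(m-1) * |W r / r ^ (N-1)| ^ (m/(m-1) - 2) * (W r / r ^ (N-1)))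
        (W r / r ^ (N-1)) := hasDerivAt_abs_rpow _ hp'
    have hAd := (hΦd.comp r hψd).const_mul ((m-1)/m)
    have hEq : (fun x : ℝ => (m-1)/m * |u' x| ^ m)
        =ᶠ[nhds r] (fun x : ℝ => (m-1)/m *
          ((fun y : ℝ => |y| ^ (m/(m-1))) ∘ (fun x : ℝ => W x / x ^ (N-1))) x) := by
      filter_upwards [hU] with x hx
      simp only [Function.comp]
      rw [hψeq x (ne_of_gt hx.1), phi_abs m hm2 (u' x), ← Real.rpow_mul (abs_nonneg _)]
      congr 2
      field_simp
    have hKd := hAd.congr_of_eventuallyEq hEq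
    have hFU : HasDerivAt (fun x => F (u x)) (f (u r) * u' r) r :=
      (hF_deriv (u r) (hupos r ⟨hr.le, hrR⟩)).comp r (hderivU r hr hrR)
    have hEd := hKd.add hFU
    convert hEd using 1
    · rfl
    · rfl
    · rfl
    -- algebra for the derivative value
    have e1 : |W r / r ^ (N-1)| ^ (m/(m-1) - 2) * (W r / r ^ (N-1)) = u' r := by
      rw [hψeq r (ne_of_gt hr)]
      exact phi_inv m hm hm2 (u' r)
    have hncast : ((N-1:ℕ):ℝ) = (N:ℝ) - 1 := by
      push_cast [Nat.cast_sub (by omega : 1 ≤ N)]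
      ring
    have hrn : r ^ (N-1) = r ^ (N-1-1) * r := by
      conv_lhs => rw [show N-1 = (N-1-1)+1 by omega]
      rw [pow_succ]
    have hWr : W r = r ^ (N-1) * |u' r| ^ (m-2) * u' r := rfl
    have e2 : m/(m-1) * |W r / r ^ (N-1)| ^ (m/(m-1) - 2) * (W r / r ^ (N-1)) =
        m/(m-1) * u' r := by
      rw [mul_assoc, e1]
    rw [mul_comm ((m-1)/m), mul_assoc, mul_comm _ ((m-1)/m), ← mul_assoc, e2]
    rw [hWr, hncast, hrn]
    have hrne' : r ≠ 0 := ne_of_gt hr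
    field_simp
    ring
  -- nonpositivity of E'
  have hmulphi : ∀ x : ℝ, 0 ≤ x * (|x| ^ (m-2) * x) := by
    intro x
    rw [phi_mul m hm2]
    positivity
  have hE'_nonpos : ∀ r : ℝ, 0 < r →
      -(((N:ℝ)-1)) * (u' r * (|u' r| ^ (m-2) * u' r)) / r ≤ 0 := by
    intro r hr
    have h1 := hmulphi (u' r)
    have h2 : -(((N:ℝ)-1)) * (u' r * (|u' r| ^ (m-2) * u' r)) ≤ 0 := by nlinarith
    exact div_nonpos_of_nonpos_of_nonneg h2 hr.le
  -- continuity of E on domR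
  have hcm : Continuous (fun y : ℝ => |y| ^ m) :=
    Continuous.rpow_const continuous_abs (fun x => Or.inr hm0.le)
  have hE_cont : ContinuousOn E (domR R) := by
    apply ContinuousOn.add
    · exact continuousOn_const.mul (hcm.comp_continuousOn hu'c)
    · intro x hx
      exact ((hF_deriv (u x) (hupos x hx)).continuousAt).comp_continuousWithinAt (hcontu x hx)
  -- E is antitone on segments of the domain
  have hE_anti : ∀ σ ρ : ℝ, 0 ≤ σ → ρ ∈ domR R → AntitoneOn E (Icc σ ρ) := by
    intro σ ρ hσ hρ
    have hsub := hIcc_sub σ ρ hσ hρ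
    apply antitoneOn_of_deriv_nonpos (convex_Icc _ _) (hE_cont.mono hsub)
    · rw [interior_Icc]
      intro x hx
      have hx0 : 0 < x := lt_of_le_of_lt hσ hx.1
      have hxR : (x:EReal) < R := lt_of_le_of_lt (EReal.coe_le_coe_iff.2 hx.2.le) hρ.2
      exact (hE_deriv x hx0 hxR).differentiableAt.differentiableWithinAt
    · rw [interior_Icc]
      intro x hx
      have hx0 : 0 < x := lt_of_le_of_lt hσ hx.1
      have hxR : (x:EReal) < R := lt_of_le_of_lt (EReal.coe_le_coe_iff.2 hx.2.le) hρ.2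
      rw [(hE_deriv x hx0 hxR).deriv]
      exact hE'_nonpos x hx0
  -- Lemma B : no stationary point at level ≤ b
  have lemmaB : ∀ σ : ℝ, 0 ≤ σ → (σ:EReal) < R → u' σ = 0 → u σ ≤ b → False := by
    intro σ hσ0 hσR hσ' hσb
    have hσdom : σ ∈ domR R := ⟨hσ0, hσR⟩
    have huσ : 0 < u σ := hupos σ hσdom
    have hEσ : E σ = F (u σ) := by
      rw [hEdef]
      simp only [hσ', abs_zero, Real.zero_rpow (ne_of_gt hm0), mul_zero, zero_add]
    have hev2 : ∀ᶠ r in limR R, u r < u σ / 2 := hulim.eventually (Iio_mem_nhds (half_pos huσ))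
    obtain ⟨r0, ⟨hσr0, hr0dom⟩, hur0⟩ := ((eventually_limR σ hσ0 hσR).and hev2).exists
    have hur0pos : 0 < u r0 := hupos r0 hr0dom
    have h1 : F (u σ) ≤ F (u r0) := hF_mono (u r0) (u σ) hur0pos (by linarith) hσb
    have h2 : E σ ≤ E r0 := by
      have hnn : 0 ≤ (m-1)/m * |u' r0| ^ m := by positivity
      have : F (u r0) ≤ E r0 := by rw [hEdef]; simp only; linarith
      linarith [hEσ.le]
    have hanti := hE_anti σ r0 hσ0 hr0dom
    have hconst : ∀ x ∈ Icc σ r0, E x = E σ := by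
      intro x hx
      have l1 : E x ≤ E σ := hanti (left_mem_Icc.2 hσr0.le) hx hx.1
      have l2 : E r0 ≤ E x := hanti hx (right_mem_Icc.2 hσr0.le) hx.2
      linarith
    have hu'0i : ∀ x ∈ Ioo σ r0, u' x = 0 := by
      intro x hx
      have hx0 : 0 < x := lt_of_le_of_lt hσ0 hx.1
      have hxR : (x:EReal) < R := lt_of_le_of_lt (EReal.coe_le_coe_iff.2 hx.2.le) hr0dom.2
      have hd := hE_deriv x hx0 hxR
      have hnbhd : Icc σ r0 ∈ nhds x :=
        mem_of_superset (isOpen_Ioo.mem_nhds hx) Ioo_subset_Icc_self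
      have hEc : E =ᶠ[nhds x] (fun _ => E σ) := by
        filter_upwards [hnbhd] with y hy
        exact hconst y hy
      have hd0 : HasDerivAt E 0 x := (hasDerivAt_const x (E σ)).congr_of_eventuallyEq hEc
      have hval : -(((N:ℝ)-1)) * (u' x * (|u' x| ^ (m-2) * u' x)) / x = 0 := hd.unique hd0
      have h3 : u' x * (|u' x| ^ (m-2) * u' x) = 0 := by
        have hNne : ((N:ℝ) - 1) ≠ 0 := by linarith
        rcases div_eq_zero_iff.1 hval with h | h
        · rcases mul_eq_zero.1 h with h' | h'
          · exfalso; exact hNne (neg_eq_zero.1 h')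
          · exact h'
        · exfalso; linarith
      have h4 : |u' x| ^ m = 0 := by rw [← phi_mul m hm2]; exact h3
      by_contra hne
      have : (0:ℝ) < |u' x| ^ m := Real.rpow_pos_of_pos (abs_pos.2 hne) m
      linarith
    have hmono : MonotoneOn u (Icc σ r0) := by
      apply monotoneOn_of_deriv_nonneg (convex_Icc _ _) (hcontu.mono (hIcc_sub σ r0 hσ0 hr0dom))
      · rw [interior_Icc]
        intro x hx
        have hx0 : 0 < x := lt_of_le_of_lt hσ0 hx.1
        have hxR : (x:EReal) < R := lt_of_le_of_lt (EReal.coe_le_coe_iff.2 hx.2.le) hr0dom.2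
        exact (hderivU x hx0 hxR).differentiableAt.differentiableWithinAt
      · rw [interior_Icc]
        intro x hx
        have hx0 : 0 < x := lt_of_le_of_lt hσ0 hx.1
        have hxR : (x:EReal) < R := lt_of_le_of_lt (EReal.coe_le_coe_iff.2 hx.2.le) hr0dom.2
        rw [(hderivU x hx0 hxR).deriv, hu'0i x hx]
    have : u σ ≤ u r0 := hmono (left_mem_Icc.2 hσr0.le) (right_mem_Icc.2 hσr0.le) hσr0.le
    linarith
  -- Lemma C : below level b the solution is non-increasing
  have lemmaC : ∀ ρ : ℝ, 0 < ρ → (ρ:EReal) < R → u ρ ≤ b → u' ρ ≤ 0 := by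
    intro ρ hρ0 hρR hρb
    by_contra hcon
    push_neg at hcon
    have hd := hderivU ρ hρ0 hρR
    have hslope := hasDerivAt_iff_tendsto_slope.1 hd
    have h2 : Tendsto (slope u ρ) (nhdsWithin ρ (Iio ρ)) (nhds (u' ρ)) :=
      hslope.mono_left (nhdsWithin_mono _ (fun x hx => ne_of_lt hx))
    have h3 : ∀ᶠ x in nhdsWithin ρ (Iio ρ), 0 < slope u ρ x :=
      h2.eventually (eventually_gt_nhds hcon)
    have h4 : ∀ᶠ x in nhdsWithin ρ (Iio ρ), x ∈ Ioo (0:ℝ) ρ :=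
      Ioo_mem_nhdsLT hρ0
    obtain ⟨x, hx1, hx2⟩ := (h3.and h4).exists
    have hux : u x < u ρ := by
      by_contra hle
      push_neg at hle
      have hs : slope u ρ x = (u x - u ρ) / (x - ρ) := slope_def_field u ρ x
      have : slope u ρ x ≤ 0 := by
        rw [hs]
        apply div_nonpos_of_nonneg_of_nonpos (by linarith) (by linarith [hx2.2])
      linarith
    -- minimum of u on [0, ρ]
    have hρdom : ρ ∈ domR R := ⟨hρ0.le, hρR⟩
    obtain ⟨σ, hσmem, hσmin⟩ := (isCompact_Icc (a := (0:ℝ)) (b := ρ)).exists_isMinOn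
      (nonempty_Icc.2 hρ0.le) (hcontu.mono (hIcc_sub 0 ρ le_rfl hρdom))
    have hσx : u σ ≤ u x := hσmin ⟨hx2.1.le, hx2.2.le⟩
    have hσρ : u σ < u ρ := lt_of_le_of_lt hσx hux
    have hσneρ : σ ≠ ρ := by
      intro he
      rw [he] at hσρ
      exact lt_irrefl _ hσρ
    have hσR' : (σ:EReal) < R := lt_of_le_of_lt (EReal.coe_le_coe_iff.2 hσmem.2) hρR
    have hu'σ : u' σ = 0 := by
      rcases eq_or_lt_of_le hσmem.1 with h0 | h0
      · rw [← h0]; exact hu'0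
      · have hloc : IsLocalMin u σ :=
          hσmin.isLocalMin (Icc_mem_nhds h0 (lt_of_le_of_ne hσmem.2 hσneρ))
        exact hloc.hasDerivAt_eq_zero (hderivU σ h0 hσR')
    exact lemmaB σ hσmem.1 hσR' hu'σ (by linarith)
  constructor
  · -- the limit statement
    have key : Tendsto (fun r : ℝ => r * u' r) (limR R) (nhds 0) := by
      by_cases hT : R = ⊤
      · subst hT
        rw [limR_top] at hulim ⊢
        -- choose r1 beyond which u < b
        have hevb : ∀ᶠ r in atTop, u r < b := hulim.eventually (Iio_mem_nhds hb)
        obtain ⟨r0, hr0⟩ := eventually_atTop.1 hevb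
        set r1 : ℝ := max r0 1 with hr1def
        have hr1pos : (0:ℝ) < r1 := lt_of_lt_of_le one_pos (le_max_right _ _)
        have hdom : ∀ r : ℝ, 0 ≤ r → r ∈ domR ⊤ :=
          fun r h => ⟨h, by exact_mod_cast EReal.coe_lt_top r⟩
        have hub : ∀ r : ℝ, r1 ≤ r → u r < b :=
          fun r hr => hr0 r (le_trans (le_max_left _ _) hr)
        have hu'np : ∀ r : ℝ, r1 ≤ r → u' r ≤ 0 := fun r hr =>
          lemmaC r (lt_of_lt_of_le hr1pos hr) (by exact_mod_cast EReal.coe_lt_top r)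
            (hub r hr).le
        have hWnp : ∀ r : ℝ, r1 ≤ r → W r ≤ 0 := by
          intro r hr
          have h1 : |u' r| ^ (m-2) * u' r ≤ 0 := phi_nonpos m (hu'np r hr)
          have h2 : (0:ℝ) ≤ r ^ (N-1) := pow_nonneg (le_of_lt (lt_of_lt_of_le hr1pos hr)) _
          calc W r = r ^ (N-1) * (|u' r| ^ (m-2) * u' r) := by rw [hWdef]; ring
          _ ≤ 0 := mul_nonpos_of_nonneg_of_nonpos h2 h1
        have hWmono : MonotoneOn W (Ici r1) := by
          apply monotoneOn_of_deriv_nonneg (convex_Ici _)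
          · intro x hx
            exact ((hW x (lt_of_lt_of_le hr1pos hx)
              (by exact_mod_cast EReal.coe_lt_top x)).continuousAt).continuousWithinAt
          · rw [interior_Ici]
            intro x hx
            exact (hW x (lt_trans hr1pos hx)
              (by exact_mod_cast EReal.coe_lt_top x)).differentiableAt.differentiableWithinAt
          · rw [interior_Ici]
            intro x hx
            have hx0 : 0 < x := lt_trans hr1pos hx
            rw [(hW x hx0 (by exact_mod_cast EReal.coe_lt_top x)).deriv]
            have hfu : f (u x) ≤ 0 :=
              hfnp (u x) (hupos x (hdom x hx0.le)) (hub x (le_of_lt hx)).le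
            have hxp : (0:ℝ) ≤ x ^ (N-1) := pow_nonneg hx0.le _
            nlinarith
        have habs' : ∀ s : ℝ, r1 ≤ s → |u' s| ^ (m-1) = (-W s) / s ^ (N-1) := by
          intro s hs
          have hspos : 0 < s := lt_of_lt_of_le hr1pos hs
          have h1 : |u' s| ^ (m-1) = |(|u' s| ^ (m-2) * u' s)| := (phi_abs m hm2 (u' s)).symm
          rw [h1, abs_of_nonpos (phi_nonpos m (hu'np s hs)), hWdef]
          have hne : s ^ (N-1) ≠ 0 := pow_ne_zero _ (ne_of_gt hspos)
          field_simp
        have hbound : ∀ r : ℝ, r1 ≤ r → 2*r * |u' (2*r)| ≤ 2 * u r := by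
          intro r hr
          have hrpos : 0 < r := lt_of_lt_of_le hr1pos hr
          have h2r : r1 ≤ 2*r := by linarith
          have h2rpos : (0:ℝ) < 2*r := by linarith
          have hWneg : 0 ≤ -W (2*r) := neg_nonneg.2 (hWnp _ h2r)
          have hden : (0:ℝ) < (2*r) ^ (N-1) := pow_pos h2rpos _
          set q : ℝ := (-W (2*r)) / (2*r) ^ (N-1) with hqdef
          have hqnn : 0 ≤ q := div_nonneg hWneg hden.le
          set K : ℝ := q ^ (1/(m-1)) with hKdef
          have hKnn : 0 ≤ K := Real.rpow_nonneg hqnn _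
          have hpt : ∀ s ∈ Icc r (2*r), K ≤ -u' s := by
            intro s hs
            have hsge : r1 ≤ s := le_trans hr hs.1
            have hspos : 0 < s := lt_of_lt_of_le hr1pos hsge
            have hWle : W s ≤ W (2*r) := hWmono (mem_Ici.2 hsge) (mem_Ici.2 h2r) hs.2
            have e2 : q ≤ |u' s| ^ (m-1) := by
              rw [habs' s hsge, hqdef]
              exact div_le_div₀ (neg_nonneg.2 (hWnp s hsge)) (by linarith) (pow_pos hspos _)
                (pow_le_pow_left₀ hspos.le hs.2 _)
            have e3 : K ≤ |u' s| := by
              have c1 : K ≤ (|u' s| ^ (m-1)) ^ (1/(m-1)) :=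
                Real.rpow_le_rpow hqnn e2 (by positivity)
              have c2 : (|u' s| ^ (m-1)) ^ (1/(m-1)) = |u' s| := by
                rw [← Real.rpow_mul (abs_nonneg _), mul_one_div,
                  div_self (ne_of_gt hm1), Real.rpow_one]
              rw [c2] at c1
              exact c1
            rwa [abs_of_nonpos (hu'np s hsge)] at e3
          have hint : IntervalIntegrable u' volume r (2*r) := by
            apply ContinuousOn.intervalIntegrable
            apply hu'c.mono
            intro x hx
            rw [uIcc_of_le (by linarith : r ≤ 2*r)] at hx
            exact hdom x (le_trans hrpos.le hx.1)
          have hftc : (∫ s in r..(2*r), u' s) = u (2*r) - u r := by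
            apply intervalIntegral.integral_eq_sub_of_hasDerivAt _ hint
            intro x hx
            rw [uIcc_of_le (by linarith : r ≤ 2*r)] at hx
            exact hderivU x (lt_of_lt_of_le hrpos hx.1) (by exact_mod_cast EReal.coe_lt_top x)
          have hmono_int : r * K ≤ u r - u (2*r) := by
            have h5 : (∫ _ in r..(2*r), K) ≤ ∫ s in r..(2*r), -u' s := by
              apply intervalIntegral.integral_mono_on (by linarith)
                intervalIntegrable_const hint.neg
              intro x hx
              exact hpt x hx
            rw [intervalIntegral.integral_const, intervalIntegral.integral_neg, hftc,
              smul_eq_mul] at h5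
            nlinarith
          have hu2rpos : 0 < u (2*r) := hupos _ (hdom _ h2rpos.le)
          have hurpos : 0 < u r := hupos _ (hdom _ hrpos.le)
          have hKle : K ≤ u r / r := by
            rw [le_div_iff₀ hrpos]
            nlinarith
          have hq_eq : K ^ (m-1) = q := by
            rw [hKdef, ← Real.rpow_mul hqnn, one_div, inv_mul_cancel₀ (ne_of_gt hm1),
              Real.rpow_one]
          have lhs_eq : (2*r * |u' (2*r)|) ^ (m-1) = (2*r) ^ (m-1) * q := by
            rw [Real.mul_rpow h2rpos.le (abs_nonneg _), habs' (2*r) h2r, hqdef]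
          have cmp : (2*r) ^ (m-1) * q ≤ (2*r) ^ (m-1) * (u r / r) ^ (m-1) := by
            apply mul_le_mul_of_nonneg_left _ (Real.rpow_nonneg h2rpos.le _)
            rw [← hq_eq]
            exact Real.rpow_le_rpow hKnn hKle hm1.le
          have rhs_eq : (2*r) ^ (m-1) * (u r / r) ^ (m-1) = (2 * u r) ^ (m-1) := by
            rw [← Real.mul_rpow h2rpos.le (div_nonneg hurpos.le hrpos.le)]
            congr 1
            field_simp
          have hfin : (2*r * |u' (2*r)|) ^ (m-1) ≤ (2 * u r) ^ (m-1) := by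
            rw [lhs_eq, ← rhs_eq]
            exact cmp
          have hl : (0:ℝ) ≤ 2*r * |u' (2*r)| := by positivity
          have hr' : (0:ℝ) ≤ 2 * u r := by linarith
          exact (Real.rpow_le_rpow_iff hl hr' hm1).1 hfin
        have hg : Tendsto (fun t : ℝ => 2 * u (t/2)) atTop (nhds 0) := by
          have h1 : Tendsto (fun t : ℝ => t/2) atTop atTop :=
            tendsto_id.atTop_div_const two_pos
          simpa using (hulim.comp h1).const_mul 2
        apply squeeze_zero_norm' _ hg
        filter_upwards [eventually_ge_atTop (2*r1)] with t ht
        have hzr : r1 ≤ t/2 := by linarith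
        have h7 := hbound (t/2) hzr
        have h8 : 2*(t/2) = t := by ring
        rw [h8] at h7
        have htpos : 0 < t := by linarith
        calc ‖t * u' t‖ = |t| * |u' t| := by rw [Real.norm_eq_abs, abs_mul]
        _ = t * |u' t| := by rw [abs_of_pos htpos]
        _ ≤ 2 * u (t/2) := h7
      · have hB : R ≠ ⊥ := by
          intro h
          rw [h] at hR
          simp at hR
        obtain ⟨x, rfl⟩ := ereal_cases hT hB
        rw [limR_coe] at hu'lim ⊢
        have hid : Tendsto (fun r : ℝ => r) (nhdsWithin x (Iio x)) (nhds x) :=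
          tendsto_id.mono_left nhdsWithin_le_nhds
        simpa using hid.mul hu'lim
    have t1 : Tendsto (fun r : ℝ => ((N:ℝ)-m) * u r) (limR R) (nhds 0) := by
      simpa using hulim.const_mul ((N:ℝ)-m)
    have t2 : Tendsto (fun r : ℝ => (m-1) * (r * u' r)) (limR R) (nhds 0) := by
      simpa using key.const_mul (m-1)
    have he : (fun r : ℝ => ((N:ℝ)-m) * u r + (m-1) * r * u' r)
        = fun r : ℝ => ((N:ℝ)-m) * u r + (m-1) * (r * u' r) := by
      funext r; ring
    rw [he]
    simpa using t1.add t2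
  · -- the inequality at level b
    intro rb hrb0 hrbR hurb
    have h1 : u' rb ≤ 0 := lemmaC rb hrb0 hrbR (le_of_eq hurb)
    have h2 : ((N:ℝ) - m) * b ≤ 0 := mul_nonpos_of_nonpos_of_nonneg (by linarith) hb.le
    have h3 : (m - 1) * rb * u' rb ≤ 0 :=
      mul_nonpos_of_nonneg_of_nonpos (by positivity) h1
    linarith


end
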